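/- Let X, Y, W be independent random variables on a finite group G, J an independent {0,1}-random variable, and Z distributed as X^J Y^{1−J}. Suppose constants m, α satisfy: Pr(J=0)·Pr(Y=g) ≤ m for all g ∈ G, with equality Pr(J=0)·Pr(Y=g) = m for g ∈ supp(X); and ‖XW‖ ≤ α‖X‖ for some 0 < α ≤ 1. Let A = supp(X) and c = (1−α²)·(Pr(J=1))² / (m|A|·Pr(Z ∉ A) + 1). Then ‖ZW‖ ≤ √(1−c)·‖Z‖. -/

import Mathlib

set_option maxHeartbeats 1000000


open Finset

variable {G : Type*} [Fintype G] [Group G]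

/-- A probability mass function on a finite group. -/
def IsPMF (μ : G → ℝ) : Prop := (∀ g, 0 ≤ μ g) ∧ ∑ g, μ g = 1

/-- Distribution of the product of independent random variables. -/
noncomputable def conv (μ ν : G → ℝ) (g : G) : ℝ := ∑ h, μ h * ν (h⁻¹ * g)

/-- ℓ² norm of a distribution on a finite group. -/
noncomputable def l2norm (μ : G → ℝ) : ℝ := Real.sqrt (∑ g, μ g ^ 2)

lemma sumTranslate (ω : G → ℝ) (a : G) : ∑ g, ω (a * g) = ∑ g, ω g :=
  Equiv.sum_comp (Equiv.mulLeft a) ω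

lemma sumTranslateRight (ω : G → ℝ) (a : G) : ∑ g, ω (g * a) = ∑ g, ω g :=
  Equiv.sum_comp (Equiv.mulRight a) ω

lemma conv_eq (μ ω : G → ℝ) (g : G) : conv μ ω g = ∑ k, ω k * μ (g * k⁻¹) := by
  unfold conv
  rw [← Equiv.sum_comp ((Equiv.inv G).trans (Equiv.mulLeft g)) (fun h => μ h * ω (h⁻¹ * g))]
  refine Finset.sum_congr rfl fun k _ => ?_
  simp [mul_assoc, mul_comm]

lemma conv_sum (μ ω : G → ℝ) (hω : ∑ g, ω g = 1) : ∑ g, conv μ ω g = ∑ g, μ g := by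
  unfold conv
  rw [Finset.sum_comm]
  refine Finset.sum_congr rfl fun h _ => ?_
  rw [← Finset.mul_sum, sumTranslate ω h⁻¹, hω, mul_one]

lemma conv_nonneg' (μ ω : G → ℝ) (hμ : ∀ g, 0 ≤ μ g) (hω : ∀ g, 0 ≤ ω g) (g : G) :
    0 ≤ conv μ ω g :=
  Finset.sum_nonneg fun h _ => mul_nonneg (hμ h) (hω _)

lemma conv_le (μ ω : G → ℝ) (m : ℝ) (hμ : ∀ g, μ g ≤ m) (hω0 : ∀ g, 0 ≤ ω g)
    (hω1 : ∑ g, ω g = 1) (g : G) : conv μ ω g ≤ m := by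
  rw [conv_eq]
  calc ∑ k, ω k * μ (g * k⁻¹) ≤ ∑ k, ω k * m :=
        Finset.sum_le_sum fun k _ => mul_le_mul_of_nonneg_left (hμ _) (hω0 k)
    _ = m := by rw [← Finset.sum_mul, hω1, one_mul]

lemma conv_sq_le (ν ω : G → ℝ) (hω0 : ∀ g, 0 ≤ ω g) (hω1 : ∑ g, ω g = 1) :
    ∑ g, conv ν ω g ^ 2 ≤ ∑ g, ν g ^ 2 := by
  have key : ∀ g, conv ν ω g ^ 2 ≤ ∑ k, ω k * ν (g * k⁻¹) ^ 2 := by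
    intro g
    rw [conv_eq]
    have h := Finset.sum_mul_sq_le_sq_mul_sq univ (fun k => Real.sqrt (ω k))
      (fun k => Real.sqrt (ω k) * ν (g * k⁻¹))
    have e1 : ∀ k : G, Real.sqrt (ω k) * (Real.sqrt (ω k) * ν (g * k⁻¹)) = ω k * ν (g * k⁻¹) := by
      intro k; rw [← mul_assoc, Real.mul_self_sqrt (hω0 k)]
    have e2 : ∀ k : G, Real.sqrt (ω k) ^ 2 = ω k := fun k => Real.sq_sqrt (hω0 k)
    have e3 : ∀ k : G, (Real.sqrt (ω k) * ν (g * k⁻¹)) ^ 2 = ω k * ν (g * k⁻¹) ^ 2 := by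
      intro k; rw [mul_pow, e2]
    simp only [e1, e2, e3] at h
    calc (∑ k, ω k * ν (g * k⁻¹)) ^ 2 ≤ (∑ k : G, ω k) * ∑ k, ω k * ν (g * k⁻¹) ^ 2 := h
      _ = ∑ k, ω k * ν (g * k⁻¹) ^ 2 := by rw [hω1, one_mul]
  calc ∑ g, conv ν ω g ^ 2 ≤ ∑ g, ∑ k, ω k * ν (g * k⁻¹) ^ 2 :=
        Finset.sum_le_sum fun g _ => key g
    _ = ∑ k, ∑ g, ω k * ν (g * k⁻¹) ^ 2 := Finset.sum_comm
    _ = ∑ k : G, ω k * ∑ g, ν (g * k⁻¹) ^ 2 := by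
        refine Finset.sum_congr rfl fun k _ => ?_; rw [Finset.mul_sum]
    _ = ∑ k : G, ω k * ∑ g, ν g ^ 2 := by
        refine Finset.sum_congr rfl fun k _ => ?_
        rw [sumTranslateRight (fun g => ν g ^ 2) k⁻¹]
    _ = ∑ g, ν g ^ 2 := by rw [← Finset.sum_mul, hω1, one_mul]

theorem aux18 (μX μY ω : G → ℝ) (hX : IsPMF μX) (hY : IsPMF μY) (hW : IsPMF ω)
    (p : ℝ) (hp0 : 0 ≤ p) (hp1 : p ≤ 1) (m α : ℝ) (hα0 : 0 < α) (hα1 : α ≤ 1)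
    (hm : ∀ g, (1 - p) * μY g ≤ m)
    (heq : ∀ g, 0 < μX g → (1 - p) * μY g = m)
    (hXW : l2norm (conv μX ω) ≤ α * l2norm μX)
    (A B : Finset G) (hA : ∀ g, g ∈ A ↔ 0 < μX g) (hB : ∀ g, g ∈ B ↔ ¬ 0 < μX g) :
    l2norm (conv (fun g => p * μX g + (1 - p) * μY g) ω) ≤
      Real.sqrt (1 - (1 - α ^ 2) * p ^ 2 /
          (m * (A.card : ℝ) *
            (∑ g ∈ B, (p * μX g + (1 - p) * μY g)) + 1)) *
        l2norm (fun g => p * μX g + (1 - p) * μY g) := by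
  classical
  obtain ⟨hX0, hX1⟩ := hX
  obtain ⟨hY0, hY1⟩ := hY
  obtain ⟨hW0, hW1⟩ := hW
  have h1p : 0 ≤ 1 - p := by linarith
  set ν : G → ℝ := fun g => (1 - p) * μY g with hνdef
  set Z : G → ℝ := fun g => p * μX g + (1 - p) * μY g with hZdef
  clear_value ν Z
  have hν0 : ∀ g, 0 ≤ ν g := by
    intro g; rw [hνdef]; exact mul_nonneg h1p (hY0 g)
  have hνm : ∀ g, ν g ≤ m := by
    intro g; rw [hνdef]; exact hm g
  have hZ0 : ∀ g, 0 ≤ Z g := by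
    intro g; rw [hZdef]; exact add_nonneg (mul_nonneg hp0 (hX0 g)) (hν0 1 |> fun _ => mul_nonneg h1p (hY0 g))
  have hZ1 : ∑ g, Z g = 1 := by
    simp only [hZdef, Finset.sum_add_distrib, ← Finset.mul_sum, hX1, hY1]; ring
  have hm0 : 0 ≤ m := le_trans (hν0 1) (hνm 1)
  have hXoff : ∀ g, g ∉ A → μX g = 0 := by
    intro g hg
    have := (hA g).not.mp hg
    push_neg at this
    exact le_antisymm this (hX0 g)
  -- quantities
  set E : ℝ := ∑ g, μX g ^ 2 with hEdef
  set SZ : ℝ := ∑ g, Z g ^ 2 with hSZdef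
  set K : ℝ := (A.card : ℝ) with hKdef
  set Q : ℝ := ∑ g ∈ B, Z g with hQdef
  clear_value E SZ K Q
  have hE0 : 0 ≤ E := by rw [hEdef]; exact Finset.sum_nonneg fun g _ => sq_nonneg _
  have hSZ0 : 0 ≤ SZ := by rw [hSZdef]; exact Finset.sum_nonneg fun g _ => sq_nonneg _
  have hQ0 : 0 ≤ Q := by rw [hQdef]; exact Finset.sum_nonneg fun g _ => hZ0 g
  -- sum of μX over A is 1
  have hXA : ∑ g ∈ A, μX g = 1 := by
    rw [← hX1]
    exact (Finset.sum_subset (Finset.subset_univ A)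
      (fun g _ hg => hXoff g hg)).symm ▸ rfl
  have hXA2 : ∑ g ∈ A, μX g ^ 2 = E := by
    rw [hEdef]
    symm; symm
    exact Finset.sum_subset (Finset.subset_univ A)
      (fun g _ hg => by rw [hXoff g hg]; ring)
  -- A is nonempty and E * K ≥ 1
  have hK1 : 1 ≤ E * K := by
    have := Finset.sum_mul_sq_le_sq_mul_sq A (fun _ => (1 : ℝ)) μX
    simp only [one_mul, one_pow] at this
    rw [hXA] at this
    simp only [Finset.sum_const, nsmul_eq_mul, mul_one] at this
    rw [hKdef]
    nlinarith [this, hXA2]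
  have hKpos : 0 < K := by
    by_contra h
    push_neg at h
    nlinarith [hK1, hE0]
  -- p + m*K ≤ 1
  have hZA : ∀ g ∈ A, Z g = p * μX g + m := by
    intro g hg
    simp only [hZdef]
    rw [heq g ((hA g).mp hg)]
  have hpmK : p + m * K ≤ 1 := by
    have h1 : ∑ g ∈ A, Z g = p + m * K := by
      rw [Finset.sum_congr rfl hZA, Finset.sum_add_distrib, ← Finset.mul_sum, hXA,
        Finset.sum_const, hKdef]
      push_cast
      ring
    have h2 : ∑ g ∈ A, Z g ≤ ∑ g, Z g :=
      Finset.sum_le_sum_of_subset_of_nonneg (Finset.subset_univ A) fun g _ _ => hZ0 g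
    rw [hZ1] at h2
    linarith [h1 ▸ h2]
  -- SZ decomposition and bound
  have hBA : B = Aᶜ := by
    ext g; simp [hA g, hB g, Finset.mem_compl]
  have hSZsplit : SZ = (∑ g ∈ A, Z g ^ 2) + ∑ g ∈ B, Z g ^ 2 := by
    rw [hSZdef, hBA, Finset.sum_add_sum_compl A]
  have hSA : ∑ g ∈ A, Z g ^ 2 = p ^ 2 * E + 2 * p * m + m ^ 2 * K := by
    rw [Finset.sum_congr rfl fun g hg => by rw [hZA g hg]]
    have : ∀ g ∈ A, (p * μX g + m) ^ 2 = p ^ 2 * μX g ^ 2 + 2 * p * m * μX g + m ^ 2 := by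
      intro g _; ring
    rw [Finset.sum_congr rfl this]
    rw [Finset.sum_add_distrib, Finset.sum_add_distrib, ← Finset.mul_sum, ← Finset.mul_sum,
      hXA, hXA2, Finset.sum_const, hKdef]
    push_cast
    ring
  have hSB : ∑ g ∈ B, Z g ^ 2 ≤ m * Q := by
    rw [hQdef, Finset.mul_sum]
    refine Finset.sum_le_sum fun g hg => ?_
    have hZle : Z g ≤ m := by
      have hgA : g ∉ A := by rw [hBA] at hg; exact Finset.mem_compl.mp hg
      have : μX g = 0 := hXoff g hgA
      simp only [hZdef, this, mul_zero, zero_add]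
      exact hm g
    nlinarith [hZ0 g]
  have hSZle : SZ ≤ p ^ 2 * E + 2 * p * m + m ^ 2 * K + m * Q := by
    rw [hSZsplit, hSA]; linarith
  -- key bound SZ ≤ E * (m*K*Q + 1)
  have hf6 : SZ ≤ E * (m * K * Q + 1) := by
    nlinarith [mul_nonneg (mul_nonneg hm0 hQ0) (by linarith : (0:ℝ) ≤ E * K - 1),
      mul_nonneg hm0 hQ0, sq_nonneg (1 - p), mul_pos hKpos hKpos,
      mul_nonneg hm0 (le_of_lt hKpos),
      mul_nonneg (mul_nonneg hm0 (le_of_lt hKpos)) (by linarith : (0:ℝ) ≤ 1 - p - m * K),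
      mul_nonneg (sub_nonneg.mpr hp1) (sub_nonneg.mpr hK1)]
  -- conv facts
  have hconvZ : ∀ g, conv Z ω g = p * conv μX ω g + conv ν ω g := by
    intro g
    simp only [conv, hZdef, hνdef, add_mul, Finset.sum_add_distrib, Finset.mul_sum, mul_assoc]
  have hXν : ∑ g, μX g * ν g = m := by
    have : ∀ g : G, μX g * ν g = μX g * m := by
      intro g
      by_cases h : 0 < μX g
      · have hh : ν g = m := by rw [hνdef]; exact heq g h
        rw [hh]
      · have : μX g = 0 := le_antisymm (not_lt.mp h) (hX0 g)
        rw [this]; ring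
    rw [Finset.sum_congr rfl fun g _ => this g, ← Finset.sum_mul, hX1, one_mul]
  have hSZexp : SZ = p ^ 2 * E + 2 * p * m + ∑ g, ν g ^ 2 := by
    have : ∀ g : G, Z g ^ 2 = p ^ 2 * μX g ^ 2 + 2 * p * (μX g * ν g) + ν g ^ 2 := by
      intro g; simp only [hZdef, hνdef]; ring
    rw [hSZdef, Finset.sum_congr rfl fun g _ => this g]
    rw [Finset.sum_add_distrib, Finset.sum_add_distrib, ← Finset.mul_sum, ← Finset.mul_sum,
      hXν, hEdef]
  -- bounds on conv pieces
  have hN : ∑ g, conv μX ω g ^ 2 ≤ α ^ 2 * E := by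
    have h1 := hXW
    rw [l2norm, l2norm, ← hEdef] at h1
    have h2 : 0 ≤ ∑ g, conv μX ω g ^ 2 := Finset.sum_nonneg fun g _ => sq_nonneg _
    nlinarith [Real.sq_sqrt h2, Real.sq_sqrt hE0, Real.sqrt_nonneg (∑ g, conv μX ω g ^ 2),
      Real.sqrt_nonneg E]
  have hcross : ∑ g, conv μX ω g * conv ν ω g ≤ m := by
    calc ∑ g, conv μX ω g * conv ν ω g ≤ ∑ g, conv μX ω g * m :=
          Finset.sum_le_sum fun g _ => mul_le_mul_of_nonneg_left
            (conv_le ν ω m hνm hW0 hW1 g) (conv_nonneg' μX ω hX0 hW0 g)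
      _ = m := by rw [← Finset.sum_mul, conv_sum μX ω hW1, hX1, one_mul]
  have hCY : ∑ g, conv ν ω g ^ 2 ≤ ∑ g, ν g ^ 2 := conv_sq_le ν ω hW0 hW1
  have hcross0 : 0 ≤ ∑ g, conv μX ω g * conv ν ω g :=
    Finset.sum_nonneg fun g _ => mul_nonneg (conv_nonneg' μX ω hX0 hW0 g)
      (conv_nonneg' ν ω hν0 hW0 g)
  -- expand LHS
  have hLHS : ∑ g, conv Z ω g ^ 2 = p ^ 2 * (∑ g, conv μX ω g ^ 2)
      + 2 * p * (∑ g, conv μX ω g * conv ν ω g) + ∑ g, conv ν ω g ^ 2 := by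
    have : ∀ g : G, conv Z ω g ^ 2 = p ^ 2 * conv μX ω g ^ 2
        + 2 * p * (conv μX ω g * conv ν ω g) + conv ν ω g ^ 2 := by
      intro g; rw [hconvZ g]; ring
    rw [Finset.sum_congr rfl fun g _ => this g, Finset.sum_add_distrib, Finset.sum_add_distrib,
      ← Finset.mul_sum, ← Finset.mul_sum]
  have hmain : ∑ g, conv Z ω g ^ 2 ≤ SZ - (1 - α ^ 2) * p ^ 2 * E := by
    rw [hLHS, hSZexp]
    nlinarith [hN, hcross, hCY, sq_nonneg p, mul_nonneg (mul_nonneg hp0 hp0) hE0]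
  -- denominator
  set D : ℝ := m * K * Q + 1 with hDdef
  clear_value D
  have hD1 : 1 ≤ D := by
    rw [hDdef]
    have : 0 ≤ m * K * Q := mul_nonneg (mul_nonneg hm0 (le_of_lt hKpos)) hQ0
    linarith
  have hDpos : 0 < D := by linarith
  have hnum0 : 0 ≤ (1 - α ^ 2) * p ^ 2 := mul_nonneg (by nlinarith) (sq_nonneg p)
  have hnum1 : (1 - α ^ 2) * p ^ 2 ≤ 1 := by nlinarith
  have hc1 : (1 - α ^ 2) * p ^ 2 / D ≤ 1 := by
    rw [div_le_one hDpos]; linarith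
  have hc0 : 0 ≤ (1 - α ^ 2) * p ^ 2 / D := div_nonneg hnum0 (le_of_lt hDpos)
  have hfinal : ∑ g, conv Z ω g ^ 2 ≤ (1 - (1 - α ^ 2) * p ^ 2 / D) * SZ := by
    have hdiv : (1 - α ^ 2) * p ^ 2 / D * SZ ≤ (1 - α ^ 2) * p ^ 2 * E := by
      rw [div_mul_eq_mul_div, div_le_iff₀ hDpos]
      calc (1 - α ^ 2) * p ^ 2 * SZ ≤ (1 - α ^ 2) * p ^ 2 * (E * D) := by
            rw [hDdef] at hf6; rw [hDdef]; exact mul_le_mul_of_nonneg_left hf6 hnum0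
        _ = (1 - α ^ 2) * p ^ 2 * E * D := by ring
    linarith [hmain, hdiv, mul_le_mul_of_nonneg_right hc1 hSZ0]
  -- conclude
  show l2norm (conv Z ω) ≤ Real.sqrt (1 - (1 - α ^ 2) * p ^ 2 / D) * l2norm Z
  rw [l2norm, l2norm, ← hSZdef, ← Real.sqrt_mul (by linarith : 0 ≤ 1 - (1 - α ^ 2) * p ^ 2 / D)]
  exact Real.sqrt_le_sqrt hfinal

open Classical in
/-- If Z ∼ X^J Y^{1−J} with p = Pr(J=1), Pr(J=0)Pr(Y=g) ≤ m with equality on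
    A = supp(X), and ‖XW‖ ≤ α‖X‖, then ‖ZW‖ ≤ √(1−c)‖Z‖ for
    c = (1−α²)p²/(m|A|·Pr(Z ∉ A) + 1). -/
theorem stmt18 (μX μY ω : G → ℝ) (hX : IsPMF μX) (hY : IsPMF μY) (hW : IsPMF ω)
    (p : ℝ) (hp0 : 0 ≤ p) (hp1 : p ≤ 1) (m α : ℝ) (hα0 : 0 < α) (hα1 : α ≤ 1)
    (hm : ∀ g, (1 - p) * μY g ≤ m)
    (heq : ∀ g, 0 < μX g → (1 - p) * μY g = m)
    (hXW : l2norm (conv μX ω) ≤ α * l2norm μX) :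
    l2norm (conv (fun g => p * μX g + (1 - p) * μY g) ω) ≤
      Real.sqrt (1 - (1 - α ^ 2) * p ^ 2 /
          (m * ((univ.filter fun g => 0 < μX g).card : ℝ) *
            (∑ g ∈ univ.filter fun g => ¬ 0 < μX g, (p * μX g + (1 - p) * μY g)) + 1)) *
        l2norm (fun g => p * μX g + (1 - p) * μY g) := by
  exact aux18 μX μY ω hX hY hW p hp0 hp1 m α hα0 hα1 hm heq hXW _ _
    (fun g => by simp) (fun g => by simp)
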